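/- Fix a prime p and n ∈ ℕ, and let T_n be the presented R-module described below. Then T_n is a finite module, i.e. its underlying set has only finitely many elements. -/

import Mathlib

set_option linter.unusedSectionVars false


open Polynomial Finsupp

noncomputable section

/-- The ideal `(p) ⊆ ℤ` is prime when `p` is a natural prime. -/
instance spanNatPrimeInt (p : ℕ) [hp : Fact p.Prime] :
    (Ideal.span {(p : ℤ)}).IsPrime := by
  rw [Ideal.span_singleton_prime (by exact_mod_cast hp.out.ne_zero)]
  exact Int.prime_iff_natAbs_prime.2 (by simpa using hp.out)

/-- Words on the alphabet `{0, 1, …, p−1}`. -/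
abbrev Word (p : ℕ) : Type := List (Fin p)

/-- The letter `p − 1`. -/
def lastLetter (p : ℕ) [hp : Fact p.Prime] : Fin p :=
  ⟨p - 1, by have := hp.out.pos; omega⟩

/-- The letter `0`. -/
def zeroLetter (p : ℕ) [hp : Fact p.Prime] : Fin p := ⟨0, hp.out.pos⟩

/-- The defining relations of the module `T_n` over `R = Zp[v]` (with `v = X`):
(i) `g_w` for every word `w` with `|w| > n`; and
(ii) for every `w` with `|w| ≤ n+1`, the element
`p·g_w − v^(p^(n−|w|+2))·g_{w'} − g_{w·0}` if `w = w'·(p−1)` ends in `p−1`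
(equivalently, for every `w'` with `|w'| ≤ n`, taking `w = w'·(p−1)` of length
`|w'|+1`, so that `n−|w|+2 = n+1−|w'|`), and `p·g_w − g_{w·0}` otherwise. -/
def rels (p : ℕ) [Fact p.Prime] (Zp : Type) [CommRing Zp] (n : ℕ) :
    Set (Word p →₀ Polynomial Zp) :=
  {x | ∃ w : Word p, n < w.length ∧ x = single w 1} ∪
  {x | ∃ w' : Word p, w'.length ≤ n ∧
      x = single (w' ++ [lastLetter p]) (p : Polynomial Zp)
        - single w' (X ^ p ^ (n + 1 - w'.length))
        - single ((w' ++ [lastLetter p]) ++ [zeroLetter p]) 1} ∪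
  {x | ∃ w : Word p, w.length ≤ n + 1 ∧ (∀ w' : Word p, w ≠ w' ++ [lastLetter p]) ∧
      x = single w (p : Polynomial Zp) - single (w ++ [zeroLetter p]) 1}

/-- The torsion module `T_n` of Angeltveit–Hill–Lawson: the quotient of the
free `Zp[v]`-module on the words `{g_w : w ∈ W}` by the relations `rels`. -/
abbrev T (p : ℕ) [Fact p.Prime] (Zp : Type) [CommRing Zp] (n : ℕ) : Type :=
  (Word p →₀ Polynomial Zp) ⧸ Submodule.span (Polynomial Zp) (rels p Zp n)

/-- The generator `g_w` of `T_n`. -/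
def g (p : ℕ) [Fact p.Prime] (Zp : Type) [CommRing Zp] (n : ℕ) (w : Word p) :
    T p Zp n :=
  Submodule.Quotient.mk (single w (1 : Polynomial Zp))

section aux

variable (p : ℕ) [hp : Fact p.Prime] (Zp : Type) [CommRing Zp] (n : ℕ)

lemma single_eq_smul (w : Word p) (c : Polynomial Zp) :
    single w c = c • single w (1 : Polynomial Zp) := by
  rw [Finsupp.smul_single, smul_eq_mul, mul_one]

lemma mk_rel {x : Word p →₀ Polynomial Zp} (hx : x ∈ rels p Zp n) :
    (Submodule.Quotient.mk x : T p Zp n) = 0 := by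
  rw [Submodule.Quotient.mk_eq_zero]
  exact Submodule.subset_span hx

lemma g_zero {w : Word p} (hw : n < w.length) : g p Zp n w = 0 :=
  mk_rel p Zp n (Or.inl (Or.inl ⟨w, hw, rfl⟩))

lemma rel_last {w' : Word p} (h : w'.length ≤ n) :
    (p : Polynomial Zp) • g p Zp n (w' ++ [lastLetter p])
      = (X : Polynomial Zp) ^ p ^ (n + 1 - w'.length) • g p Zp n w'
        + g p Zp n ((w' ++ [lastLetter p]) ++ [zeroLetter p]) := by
  have h0 := mk_rel p Zp n (Or.inl (Or.inr ⟨w', h, rfl⟩))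
  rw [single_eq_smul p Zp (w' ++ [lastLetter p]) (p : Polynomial Zp),
    single_eq_smul p Zp w' (X ^ p ^ (n + 1 - w'.length)),
    Submodule.Quotient.mk_sub, Submodule.Quotient.mk_sub,
    Submodule.Quotient.mk_smul, Submodule.Quotient.mk_smul,
    sub_sub, sub_eq_zero] at h0
  exact h0

lemma rel_nolast {w : Word p} (h1 : w.length ≤ n + 1)
    (h2 : ∀ w' : Word p, w ≠ w' ++ [lastLetter p]) :
    (p : Polynomial Zp) • g p Zp n w = g p Zp n (w ++ [zeroLetter p]) := by
  have h0 := mk_rel p Zp n (Or.inr ⟨w, h1, h2, rfl⟩)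
  rw [single_eq_smul p Zp w (p : Polynomial Zp),
    Submodule.Quotient.mk_sub, Submodule.Quotient.mk_smul, sub_eq_zero] at h0
  exact h0

end aux


section aux2

variable (p : ℕ) [hp : Fact p.Prime] (Zp : Type) [CommRing Zp] (n : ℕ)

/-- Per-generator `X`-torsion, by downward induction on length. -/
lemma gX : ∀ (d : ℕ) (w : Word p), n < w.length + d →
    ((X : Polynomial Zp) ^ p ^ (n + 1)) ^ d • g p Zp n w = 0 := by
  intro d
  induction d with
  | zero =>
    intro w hw
    rw [g_zero p Zp n (show n < w.length by omega), smul_zero]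
  | succ d ih =>
    intro w hw
    by_cases hlen : n < w.length
    · rw [g_zero p Zp n hlen, smul_zero]
    · push_neg at hlen
      set e := p ^ (n + 1 - w.length) with he
      have hee : e ≤ p ^ (n + 1) := Nat.pow_le_pow_right hp.out.pos (by omega)
      have key : (X : Polynomial Zp) ^ e • g p Zp n w
          = (p : Polynomial Zp) • g p Zp n (w ++ [lastLetter p])
            - g p Zp n ((w ++ [lastLetter p]) ++ [zeroLetter p]) := by
        rw [rel_last p Zp n hlen]; abel
      have h1 : ((X : Polynomial Zp) ^ p ^ (n + 1)) ^ d •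
          ((p : Polynomial Zp) • g p Zp n (w ++ [lastLetter p])) = 0 := by
        rw [smul_comm, ih (w ++ [lastLetter p])
          (by simp only [List.length_append, List.length_singleton]; omega), smul_zero]
      have h2 : ((X : Polynomial Zp) ^ p ^ (n + 1)) ^ d •
          g p Zp n ((w ++ [lastLetter p]) ++ [zeroLetter p]) = 0 :=
        ih _ (by simp only [List.length_append, List.length_singleton]; omega)
      have hX1 : (X : Polynomial Zp) ^ (p ^ (n + 1) - e) * X ^ e = X ^ p ^ (n + 1) := by
        rw [← pow_add]; congr 1; omega
      calc ((X : Polynomial Zp) ^ p ^ (n + 1)) ^ (d + 1) • g p Zp n w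
          = (((X : Polynomial Zp) ^ p ^ (n + 1)) ^ d
              * ((X : Polynomial Zp) ^ (p ^ (n + 1) - e) * X ^ e)) • g p Zp n w := by
            rw [hX1, ← pow_succ]
        _ = (X : Polynomial Zp) ^ (p ^ (n + 1) - e) •
              (((X : Polynomial Zp) ^ p ^ (n + 1)) ^ d • ((X : Polynomial Zp) ^ e • g p Zp n w)) := by
            rw [mul_smul, mul_smul, smul_comm]
        _ = 0 := by rw [key, smul_sub, h1, h2, sub_zero, smul_zero]

lemma gX' (w : Word p) :
    (X : Polynomial Zp) ^ (p ^ (n + 1) * (n + 1)) • g p Zp n w = 0 := by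
  rw [pow_mul]
  exact gX p Zp n (n + 1) w (by omega)

/-- Per-generator `p`-divisibility into `X`. -/
lemma gP : ∀ (d : ℕ) (w : Word p), n < w.length + d →
    ∃ m', (p : Polynomial Zp) ^ d • g p Zp n w = (X : Polynomial Zp) • m' := by
  intro d
  induction d with
  | zero =>
    intro w hw
    exact ⟨0, by rw [g_zero p Zp n (show n < w.length by omega)]; simp⟩
  | succ d ih =>
    intro w hw
    by_cases hlen : n < w.length
    · exact ⟨0, by rw [g_zero p Zp n hlen]; simp⟩
    · push_neg at hlen
      have hstep : (p : Polynomial Zp) ^ (d + 1) • g p Zp n w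
          = (p : Polynomial Zp) ^ d • ((p : Polynomial Zp) • g p Zp n w) := by
        rw [← mul_smul, ← pow_succ]
      by_cases hend : ∃ w'' : Word p, w = w'' ++ [lastLetter p]
      · obtain ⟨w'', rfl⟩ := hend
        have hlen'' : w''.length ≤ n := by
          simp only [List.length_append, List.length_singleton] at hlen; omega
        obtain ⟨m2, hm2⟩ := ih ((w'' ++ [lastLetter p]) ++ [zeroLetter p])
          (by simp only [List.length_append, List.length_singleton] at hw ⊢; omega)
        obtain ⟨e', he'⟩ : ∃ e', p ^ (n + 1 - w''.length) = e' + 1 :=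
          ⟨p ^ (n + 1 - w''.length) - 1, by
            have : 0 < p ^ (n + 1 - w''.length) := Nat.pow_pos hp.out.pos; omega⟩
        refine ⟨(X : Polynomial Zp) ^ e' • ((p : Polynomial Zp) ^ d • g p Zp n w'') + m2, ?_⟩
        rw [hstep, rel_last p Zp n hlen'', smul_add, hm2, he', pow_succ',
          mul_smul, smul_comm ((p : Polynomial Zp) ^ d), smul_comm ((p : Polynomial Zp) ^ d),
          smul_add]
      · push_neg at hend
        obtain ⟨m2, hm2⟩ := ih (w ++ [zeroLetter p])
          (by simp only [List.length_append, List.length_singleton]; omega)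
        exact ⟨m2, by rw [hstep, rel_nolast p Zp n (by omega) hend, hm2]⟩

end aux2

section aux3

variable (p : ℕ) [hp : Fact p.Prime] (Zp : Type) [CommRing Zp] (n : ℕ)

lemma span_g : Submodule.span (Polynomial Zp) (Set.range (g p Zp n)) = ⊤ := by
  have hr : Set.range (g p Zp n)
      = (Submodule.span (Polynomial Zp) (rels p Zp n)).mkQ ''
        (Set.range fun w : Word p => single w (1 : Polynomial Zp)) := by
    rw [← Set.range_comp]; rfl
  rw [hr, Submodule.span_image, ← Finsupp.coe_basisSingleOne, Module.Basis.span_eq,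
    Submodule.map_top, Submodule.range_mkQ]

lemma X_torsion (m : T p Zp n) :
    (X : Polynomial Zp) ^ (p ^ (n + 1) * (n + 1)) • m = 0 := by
  have h : (⊤ : Submodule (Polynomial Zp) (T p Zp n)) ≤
      Submodule.torsionBy (Polynomial Zp) (T p Zp n)
        ((X : Polynomial Zp) ^ (p ^ (n + 1) * (n + 1))) := by
    rw [← span_g p Zp n]
    refine Submodule.span_le.2 ?_
    rintro _ ⟨w, rfl⟩
    exact (Submodule.mem_torsionBy_iff _ _).2 (gX' p Zp n w)
  exact (Submodule.mem_torsionBy_iff _ _).1 (h Submodule.mem_top)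

lemma P_step (m : T p Zp n) :
    ∃ m', (p : Polynomial Zp) ^ (n + 1) • m = (X : Polynomial Zp) • m' := by
  let S : Submodule (Polynomial Zp) (T p Zp n) :=
    { carrier := {m | ∃ m', (p : Polynomial Zp) ^ (n + 1) • m = (X : Polynomial Zp) • m'}
      add_mem' := by
        rintro a b ⟨a', ha⟩ ⟨b', hb⟩
        exact ⟨a' + b', by rw [smul_add, ha, hb, smul_add]⟩
      zero_mem' := ⟨0, by simp⟩
      smul_mem' := by
        rintro r a ⟨a', ha⟩
        exact ⟨r • a', by rw [smul_comm, ha, smul_comm]⟩ }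
  have h : (⊤ : Submodule (Polynomial Zp) (T p Zp n)) ≤ S := by
    rw [← span_g p Zp n]
    refine Submodule.span_le.2 ?_
    rintro _ ⟨w, rfl⟩
    exact gP p Zp n (n + 1) w (by omega)
  exact h (Submodule.mem_top : m ∈ ⊤)

lemma P_torsion (m : T p Zp n) :
    (p : Polynomial Zp) ^ ((n + 1) * (p ^ (n + 1) * (n + 1))) • m = 0 := by
  have key : ∀ (t : ℕ) (m : T p Zp n),
      ∃ m', ((p : Polynomial Zp) ^ (n + 1)) ^ t • m = (X : Polynomial Zp) ^ t • m' := by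
    intro t
    induction t with
    | zero => intro m; exact ⟨m, by simp⟩
    | succ t ih =>
      intro m
      obtain ⟨m1, hm1⟩ := P_step p Zp n m
      obtain ⟨m2, hm2⟩ := ih m1
      refine ⟨m2, ?_⟩
      rw [pow_succ, mul_smul, hm1, smul_comm, hm2, smul_comm, ← mul_smul, ← pow_succ]
  obtain ⟨m', hm'⟩ := key (p ^ (n + 1) * (n + 1)) m
  rw [pow_mul, hm', X_torsion p Zp n m']

end aux3

section aux4

variable (p : ℕ) [hp : Fact p.Prime] (Zp : Type) [CommRing Zp] [Algebra ℤ Zp]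
  [IsLocalization.AtPrime Zp (Ideal.span {(p : ℤ)})] (n : ℕ)

lemma C_smul_exists_int {m0 : T p Zp n}
    (h : (p : Polynomial Zp) ^ ((n + 1) * (p ^ (n + 1) * (n + 1))) • m0 = 0) (c : Zp) :
    ∃ z : ℤ, C c • m0 = z • m0 := by
  set K := (n + 1) * (p ^ (n + 1) * (n + 1)) with hK
  obtain ⟨⟨a, s⟩, hs⟩ := IsLocalization.surj (Ideal.span {(p : ℤ)}).primeCompl c
  simp only [algebraMap_int_eq, eq_intCast] at hs
  have hnd : ¬ (p : ℤ) ∣ (s : ℤ) := fun hdvd => s.2 (Ideal.mem_span_singleton.2 hdvd)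
  have hpprime : Prime (p : ℤ) := Nat.prime_iff_prime_int.1 hp.out
  obtain ⟨u, v, huv⟩ :=
    (IsCoprime.pow_right (n := K) ((hpprime.coprime_iff_not_dvd.2 hnd).symm))
  refine ⟨u * a, ?_⟩
  have hq0 : ((p : ℤ) ^ K) • m0 = 0 := by
    rw [← Int.cast_smul_eq_zsmul (Polynomial Zp)]
    push_cast
    exact h
  have h1 : m0 = ((u * (s : ℤ) : ℤ)) • m0 := by
    have h2 : ((u * (s : ℤ) + v * (p : ℤ) ^ K : ℤ)) • m0 = m0 := by rw [huv, one_smul]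
    conv_lhs => rw [← h2]
    rw [add_smul, mul_smul v, hq0, smul_zero, add_zero]
  calc C c • m0 = C c • (((u * (s : ℤ) : ℤ)) • m0) := by rw [← h1]
    _ = C c • ((((u * (s : ℤ) : ℤ) : Polynomial Zp)) • m0) := by
        rw [Int.cast_smul_eq_zsmul]
    _ = (C c * ((u * (s : ℤ) : ℤ) : Polynomial Zp)) • m0 := by rw [smul_smul]
    _ = (((u * a : ℤ) : Polynomial Zp)) • m0 := by
        congr 1
        rw [← map_intCast (C : Zp →+* Polynomial Zp) (u * (s : ℤ)),
          ← map_intCast (C : Zp →+* Polynomial Zp) (u * a), ← map_mul]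
        congr 1
        push_cast
        rw [← hs]
        ring
    _ = (u * a : ℤ) • m0 := Int.cast_smul_eq_zsmul _ _ _

end aux4

section aux5

variable (p : ℕ) [hp : Fact p.Prime] (Zp : Type) [CommRing Zp] [Algebra ℤ Zp]
  [IsLocalization.AtPrime Zp (Ideal.span {(p : ℤ)})] (n : ℕ)

def Gset : Set (T p Zp n) :=
  (fun x : Word p × ℕ => (X : Polynomial Zp) ^ x.2 • g p Zp n x.1) ''
    ({w : Word p | w.length ≤ n} ×ˢ {j : ℕ | j < p ^ (n + 1) * (n + 1)})

lemma Gset_finite : (Gset p Zp n).Finite :=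
  Set.Finite.image _ (Set.Finite.prod (List.finite_length_le _ n) (Set.finite_Iio _))

lemma key_single (w : Word p) (q : Polynomial Zp) :
    (Submodule.Quotient.mk (single w q) : T p Zp n) ∈ Submodule.span ℤ (Gset p Zp n) := by
  induction q using Polynomial.induction_on' with
  | add q r hq hr =>
    rw [Finsupp.single_add, Submodule.Quotient.mk_add]
    exact add_mem hq hr
  | monomial j c =>
    have hm : (Submodule.Quotient.mk (single w ((monomial j) c)) : T p Zp n)
        = C c • ((X : Polynomial Zp) ^ j • g p Zp n w) := by
      rw [single_eq_smul, ← C_mul_X_pow_eq_monomial, Submodule.Quotient.mk_smul, mul_smul]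
      rfl
    rw [hm]
    by_cases hlen : n < w.length
    · rw [g_zero p Zp n hlen]; simp
    · push_neg at hlen
      by_cases hj : j < p ^ (n + 1) * (n + 1)
      · have hmem : (X : Polynomial Zp) ^ j • g p Zp n w ∈ Gset p Zp n :=
          ⟨(w, j), ⟨hlen, hj⟩, rfl⟩
        obtain ⟨z, hz⟩ := C_smul_exists_int p Zp n
          (P_torsion p Zp n ((X : Polynomial Zp) ^ j • g p Zp n w)) c
        rw [hz]
        exact Submodule.smul_mem _ z (Submodule.subset_span hmem)
      · push_neg at hj
        have h0 : (X : Polynomial Zp) ^ j • g p Zp n w = 0 := by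
          rw [show j = (j - p ^ (n + 1) * (n + 1)) + p ^ (n + 1) * (n + 1) by omega,
            pow_add, mul_smul, gX', smul_zero]
        rw [h0]; simp

lemma spanZ : Submodule.span ℤ (Gset p Zp n) = ⊤ := by
  rw [eq_top_iff]
  rintro m -
  obtain ⟨f, rfl⟩ := Submodule.Quotient.mk_surjective _ m
  induction f using Finsupp.induction with
  | zero => rw [Submodule.Quotient.mk_zero]; exact zero_mem _
  | single_add w q f _ _ ihf =>
    rw [Submodule.Quotient.mk_add]
    exact add_mem (key_single p Zp n w q) ihf

end aux5


/-- For any realization `Zp` of `ℤ_(p)`, the module `T_n` has only finitely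
many elements. -/
theorem stmt16 (p : ℕ) [Fact p.Prime] (Zp : Type) [CommRing Zp] [Algebra ℤ Zp]
    [IsLocalization.AtPrime Zp (Ideal.span {(p : ℤ)})] (n : ℕ) :
    Finite (T p Zp n) := by
  have hp : Fact p.Prime := ‹_›
  set K := (n + 1) * (p ^ (n + 1) * (n + 1)) with hK
  have htor : Module.IsTorsionBy ℤ (T p Zp n) ((p ^ K : ℕ) : ℤ) := by
    intro m
    show ((p ^ K : ℕ) : ℤ) • m = 0
    rw [← Int.cast_smul_eq_zsmul (Polynomial Zp)]
    push_cast
    exact P_torsion p Zp n m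
  have htorSet : Module.IsTorsionBySet ℤ (T p Zp n)
      (Ideal.span {((p ^ K : ℕ) : ℤ)} : Set ℤ) :=
    (Module.isTorsionBySet_span_singleton_iff _).mpr htor
  letI : Module (ℤ ⧸ Ideal.span {((p ^ K : ℕ) : ℤ)}) (T p Zp n) := htorSet.module
  haveI : NeZero (p ^ K) := ⟨pow_ne_zero _ hp.out.ne_zero⟩
  haveI : Finite (ℤ ⧸ Ideal.span {((p ^ K : ℕ) : ℤ)}) :=
    Finite.of_equiv _ (Int.quotientSpanNatEquivZMod (p ^ K)).symm.toEquiv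
  haveI : Module.Finite (ℤ ⧸ Ideal.span {((p ^ K : ℕ) : ℤ)}) (T p Zp n) := by
    refine ⟨?_⟩
    rw [Submodule.fg_def]
    refine ⟨Gset p Zp n, Gset_finite p Zp n, ?_⟩
    rw [eq_top_iff]
    rintro m -
    have hm : m ∈ Submodule.span ℤ (Gset p Zp n) := by rw [spanZ]; trivial
    induction hm using Submodule.span_induction with
    | mem x hx => exact Submodule.subset_span hx
    | zero => exact zero_mem _
    | add x y _ _ hx hy => exact add_mem hx hy
    | smul z x _ hx =>
      rw [← Module.IsTorsionBySet.mk_smul htorSet z x]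
      exact Submodule.smul_mem _ _ hx
  exact Module.finite_of_finite (ℤ ⧸ Ideal.span {((p ^ K : ℕ) : ℤ)})

end
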